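/- Let χ: ℤ → ℂ be the Dirichlet character mod 12 with χ(±1 mod 12) = 1, χ(±5 mod 12) = -1, and χ(n) = 0 if gcd(n,12) > 1. Then for Im τ > 0, η(τ) = (1/2) ∑_{n∈ℤ} χ(n) e^{πiτn²/12}. -/

import Mathlib

open Complex Real Finset Filter

noncomputable def dedekindEta (τ : ℂ) : ℂ :=
  Complex.exp (π * I * τ / 12) * ∏' n : ℕ, (1 - Complex.exp (2 * π * I * (n + 1) * τ))

noncomputable def χ (n : ℤ) : ℂ :=
  if n % 12 = 1 ∨ n % 12 = 11 then 1
  else if n % 12 = 5 ∨ n % 12 = 7 then -1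
  else 0

private def tri : ℕ → ℕ
  | 0 => 0
  | n+1 => tri n + n + 1

private lemma tri_ge (n : ℕ) : n ≤ tri n := by
  induction n with
  | zero => simp [tri]
  | succ m ih => simp only [tri]; omega

/-- The Shanks partial sum. -/
noncomputable def shanksL (q : ℂ) (n : ℕ) : ℂ :=
  ∑ r ∈ Finset.range (n+1),
    (-1)^r * (∏ j ∈ Finset.Ico (r+1) (n+1), (1 - q^j)) * q^(n*r + tri r)

lemma shanksL_succ (q : ℂ) (m : ℕ) :
    shanksL q (m+1) = shanksL q m
      + (-1)^(m+1) * (q^((m+1)*(m+1) + tri (m+1)) + q^(m*m + tri m + (2*m+1))) := by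
  classical
  set A : ℕ → ℂ := fun r => (-1)^r * (∏ j ∈ Finset.Ico (r+1) (m+1), (1 - q^j)) * q^(m*r + tri r)
    with hA
  set B : ℕ → ℂ := fun r => (-1)^(r+1) * (∏ j ∈ Finset.Ico r (m+1), (1 - q^j)) * q^(m*r + tri r)
    with hB
  have hB0 : B 0 = 0 := by
    have h0 : (0:ℕ) ∈ Finset.Ico 0 (m+1) := by simp
    simp only [hB]
    rw [Finset.prod_eq_zero h0 (by simp)]
    ring
  have hAq : ∀ r ∈ Finset.range (m+1), A r * q^r = A r + B r := by
    intro r hr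
    simp only [Finset.mem_range] at hr
    rcases Nat.eq_zero_or_pos r with rfl | hrpos
    · simp [hB0]
    · have hlt : r < m+1 := hr
      rw [hB, hA]
      simp only
      rw [Finset.prod_eq_prod_Ico_succ_bot hlt]
      ring
  have hBA : ∀ r : ℕ, B (r+1) = A r * q^(r + (m+1)) := by
    intro r
    simp only [hA, hB]
    have hexp : m*(r+1) + tri (r+1) = (m*r + tri r) + (r + (m+1)) := by
      simp only [tri]; ring
    rw [hexp, pow_add]
    ring
  have key : ∀ r ∈ Finset.range (m+1),
      (-1:ℂ)^r * (∏ j ∈ Finset.Ico (r+1) (m+1+1), (1 - q^j)) * q^((m+1)*r + tri r)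
      = A r * q^r - A r * q^(r + (m+1)) := by
    intro r hr
    simp only [Finset.mem_range] at hr
    rw [Finset.prod_Ico_succ_top (by omega)]
    have hexp : (m+1)*r + tri r = (m*r + tri r) + r := by ring
    rw [hexp, pow_add, hA]
    simp only
    rw [pow_add]
    ring
  have hLm : shanksL q m = ∑ r ∈ Finset.range (m+1), A r := rfl
  calc shanksL q (m+1)
      = ∑ r ∈ Finset.range (m+1),
          ((-1:ℂ)^r * (∏ j ∈ Finset.Ico (r+1) (m+1+1), (1 - q^j)) * q^((m+1)*r + tri r))
        + (-1)^(m+1) * (∏ j ∈ Finset.Ico (m+1+1) (m+1+1), (1 - q^j)) * q^((m+1)*(m+1) + tri (m+1)) := by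
        rw [shanksL, Finset.sum_range_succ]
    _ = ∑ r ∈ Finset.range (m+1), (A r * q^r - A r * q^(r + (m+1)))
        + (-1)^(m+1) * q^((m+1)*(m+1) + tri (m+1)) := by
        rw [Finset.sum_congr rfl key]; simp
    _ = (∑ r ∈ Finset.range (m+1), A r) + (∑ r ∈ Finset.range (m+1), B r)
        - (∑ r ∈ Finset.range (m+1), A r * q^(r + (m+1)))
        + (-1)^(m+1) * q^((m+1)*(m+1) + tri (m+1)) := by
        rw [Finset.sum_sub_distrib, Finset.sum_congr rfl hAq, Finset.sum_add_distrib]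
    _ = (∑ r ∈ Finset.range (m+1), A r) + (∑ r ∈ Finset.range m, A r * q^(r + (m+1)))
        - (∑ r ∈ Finset.range (m+1), A r * q^(r + (m+1)))
        + (-1)^(m+1) * q^((m+1)*(m+1) + tri (m+1)) := by
        rw [show (∑ r ∈ Finset.range (m+1), B r) = ∑ r ∈ Finset.range m, A r * q^(r + (m+1)) by
          rw [Finset.sum_range_succ' B, hB0, add_zero]
          exact Finset.sum_congr rfl fun r _ => hBA r]
    _ = (∑ r ∈ Finset.range (m+1), A r) - A m * q^(m + (m+1))
        + (-1)^(m+1) * q^((m+1)*(m+1) + tri (m+1)) := by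
        rw [Finset.sum_range_succ (fun r => A r * q^(r + (m+1)))]
        ring
    _ = shanksL q m + (-1)^(m+1) * (q^((m+1)*(m+1) + tri (m+1)) + q^(m*m + tri m + (2*m+1))) := by
        rw [hLm, hA]
        simp only [Finset.Ico_self, Finset.prod_empty]
        ring

section PentSection
variable {q : ℂ}

lemma shanksL_zero (q : ℂ) : shanksL q 0 = 1 := by
  simp [shanksL, tri]

lemma shanksL_formula (q : ℂ) (N : ℕ) :
    shanksL q N = 1 + ∑ i ∈ Finset.range N,
      (-1)^(i+1) * (q^((i+1)*(i+1) + tri (i+1)) + q^(i*i + tri i + (2*i+1))) := by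
  induction N with
  | zero => simp [shanksL_zero]
  | succ m ih => rw [Finset.sum_range_succ, shanksL_succ, ih]; ring

lemma geom_finset_le (hq : ‖q‖ < 1) (s : Finset ℕ) :
    ∑ i ∈ s, ‖q‖^i ≤ (1 - ‖q‖)⁻¹ := by
  have hsum : Summable fun i : ℕ => ‖q‖^i := summable_geometric_of_lt_one (norm_nonneg q) hq
  calc ∑ i ∈ s, ‖q‖^i ≤ ∑' i : ℕ, ‖q‖^i :=
        Summable.sum_le_tsum s (fun i _ => pow_nonneg (norm_nonneg q) i) hsum
    _ = (1 - ‖q‖)⁻¹ := tsum_geometric_of_lt_one (norm_nonneg q) hq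

lemma prod_norm_bound (hq : ‖q‖ < 1) (a b : ℕ) :
    ‖∏ j ∈ Finset.Ico a b, (1 - q^j)‖ ≤ Real.exp (1 - ‖q‖)⁻¹ := by
  calc ‖∏ j ∈ Finset.Ico a b, (1 - q^j)‖
      ≤ ∏ j ∈ Finset.Ico a b, ‖1 - q^j‖ := Finset.norm_prod_le _ _
    _ ≤ ∏ j ∈ Finset.Ico a b, Real.exp (‖q‖^j) := by
        apply Finset.prod_le_prod (fun j _ => norm_nonneg _)
        intro j _
        calc ‖1 - q^j‖ ≤ ‖(1:ℂ)‖ + ‖q^j‖ := norm_sub_le _ _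
          _ = ‖q‖^j + 1 := by rw [norm_one, norm_pow]; ring
          _ ≤ Real.exp (‖q‖^j) := Real.add_one_le_exp _
    _ = Real.exp (∑ j ∈ Finset.Ico a b, ‖q‖^j) := (Real.exp_sum _ _).symm
    _ ≤ Real.exp (1 - ‖q‖)⁻¹ := Real.exp_le_exp.mpr (geom_finset_le hq _)

lemma one_sub_pow_ne (hq : ‖q‖ < 1) (n : ℕ) : (1 : ℂ) - q^(n+1) ≠ 0 := by
  intro h
  have h1 : ‖q^(n+1)‖ < 1 := by
    rw [norm_pow]
    exact pow_lt_one₀ (norm_nonneg q) hq (Nat.succ_ne_zero n)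
  have : (1:ℂ) = q^(n+1) := by linear_combination h
  rw [← this] at h1
  simp at h1

lemma multipliable_one_sub (hq : ‖q‖ < 1) : Multipliable fun n : ℕ => 1 - q^(n+1) := by
  apply Complex.multipliable_of_summable_log
  apply Summable.of_norm
  have hb : ∀ n : ℕ, ‖Complex.log (1 - q^(n+1))‖ ≤ ((1 - ‖q‖)⁻¹/2 + 1) * ‖q‖^(n+1) := by
    intro n
    have hzn : ‖-q^(n+1)‖ < 1 := by
      rw [norm_neg, norm_pow]
      exact pow_lt_one₀ (norm_nonneg q) hq (Nat.succ_ne_zero n)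
    have := Complex.norm_log_one_add_le hzn
    rw [show (1 : ℂ) + -q^(n+1) = 1 - q^(n+1) by ring] at this
    rw [norm_neg, norm_pow] at this
    have hq1 : (0:ℝ) ≤ ‖q‖ := norm_nonneg q
    have hpow1 : ‖q‖^(n+1) ≤ 1 := le_of_lt (pow_lt_one₀ hq1 hq (Nat.succ_ne_zero n))
    have hinv : (1 - ‖q‖^(n+1))⁻¹ ≤ (1 - ‖q‖)⁻¹ := by
      apply inv_anti₀
      · linarith
      · have : ‖q‖ ^ (n+1) ≤ ‖q‖ := pow_le_of_le_one hq1 hq.le (Nat.succ_ne_zero n)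
        linarith
    calc ‖Complex.log (1 - q^(n+1))‖
        ≤ (‖q‖^(n+1))^2 * (1 - ‖q‖^(n+1))⁻¹ / 2 + ‖q‖^(n+1) := this
      _ ≤ ‖q‖^(n+1) * (1 - ‖q‖)⁻¹ / 2 + ‖q‖^(n+1) := by
          have h1 : (‖q‖^(n+1))^2 ≤ ‖q‖^(n+1) := by
            nlinarith [pow_nonneg hq1 (n+1)]
          have h2 : (0:ℝ) ≤ (1 - ‖q‖)⁻¹ := by
            apply inv_nonneg.mpr; linarith
          have h3 : (0:ℝ) ≤ (1 - ‖q‖^(n+1))⁻¹ := by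
            apply inv_nonneg.mpr; linarith
          have := mul_le_mul h1 hinv h3 (pow_nonneg hq1 (n+1))
          linarith
      _ = ((1 - ‖q‖)⁻¹/2 + 1) * ‖q‖^(n+1) := by ring
  apply Summable.of_nonneg_of_le (fun n => norm_nonneg _) hb
  exact ((summable_geometric_of_lt_one (norm_nonneg q) hq).mul_left _).comp_injective
    (add_left_injective 1)

lemma tendsto_shanksL (hq : ‖q‖ < 1) :
    Tendsto (shanksL q) atTop (nhds (∏' n : ℕ, (1 - q^(n+1)))) := by
  have hM := multipliable_one_sub hq
  have hF : Tendsto (fun N => ∏ i ∈ Finset.range N, (1 - q^(i+1))) atTop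
      (nhds (∏' n : ℕ, (1 - q^(n+1)))) := hM.hasProd.tendsto_prod_nat
  have hprodeq : ∀ N : ℕ, (∏ j ∈ Finset.Ico 1 (N+1), (1 - q^j))
      = ∏ i ∈ Finset.range N, (1 - q^(i+1)) := by
    intro N
    rw [Finset.range_eq_Ico]
    exact (Finset.prod_Ico_eq_prod_range _ _ _).trans (by
      simp [Nat.add_comm])
  have hdiff : ∀ N : ℕ, ‖shanksL q N - ∏ i ∈ Finset.range N, (1 - q^(i+1))‖
      ≤ Real.exp (1 - ‖q‖)⁻¹ * (1 - ‖q‖)⁻¹ * ‖q‖^N := by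
    intro N
    have : shanksL q N = (∏ i ∈ Finset.range N, (1 - q^(i+1)))
        + ∑ r ∈ Finset.Ico 1 (N+1),
            (-1:ℂ)^r * (∏ j ∈ Finset.Ico (r+1) (N+1), (1 - q^j)) * q^(N*r + tri r) := by
      rw [shanksL, Finset.range_eq_Ico, Finset.sum_eq_sum_Ico_succ_bot (by omega)]
      simp [hprodeq N, tri]
    rw [this, add_sub_cancel_left]
    calc ‖∑ r ∈ Finset.Ico 1 (N+1),
            (-1:ℂ)^r * (∏ j ∈ Finset.Ico (r+1) (N+1), (1 - q^j)) * q^(N*r + tri r)‖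
        ≤ ∑ r ∈ Finset.Ico 1 (N+1),
            ‖(-1:ℂ)^r * (∏ j ∈ Finset.Ico (r+1) (N+1), (1 - q^j)) * q^(N*r + tri r)‖ :=
          norm_sum_le _ _
      _ ≤ ∑ r ∈ Finset.Ico 1 (N+1), Real.exp (1 - ‖q‖)⁻¹ * ‖q‖^(N + r) := by
          apply Finset.sum_le_sum
          intro r hr
          simp only [Finset.mem_Ico] at hr
          rw [norm_mul, norm_mul, norm_pow, norm_neg, norm_one, one_pow, one_mul, norm_pow]
          have h1 : ‖q‖^(N*r + tri r) ≤ ‖q‖^(N + r) := by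
            apply pow_le_pow_of_le_one (norm_nonneg q) hq.le
            have := tri_ge r
            have : N * 1 ≤ N * r := Nat.mul_le_mul_left N hr.1
            omega
          have h2 := prod_norm_bound hq (r+1) (N+1)
          have h3 : (0:ℝ) ≤ ‖q‖^(N*r + tri r) := pow_nonneg (norm_nonneg q) _
          calc ‖∏ j ∈ Finset.Ico (r+1) (N+1), (1 - q^j)‖ * ‖q‖^(N*r + tri r)
              ≤ Real.exp (1 - ‖q‖)⁻¹ * ‖q‖^(N*r + tri r) := by
                apply mul_le_mul_of_nonneg_right h2 h3
            _ ≤ Real.exp (1 - ‖q‖)⁻¹ * ‖q‖^(N + r) := by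
                apply mul_le_mul_of_nonneg_left h1 (Real.exp_nonneg _)
      _ ≤ Real.exp (1 - ‖q‖)⁻¹ * (1 - ‖q‖)⁻¹ * ‖q‖^N := by
          rw [← Finset.mul_sum]
          have : ∑ r ∈ Finset.Ico 1 (N+1), ‖q‖^(N + r)
              = ‖q‖^N * ∑ r ∈ Finset.Ico 1 (N+1), ‖q‖^r := by
            rw [Finset.mul_sum]
            exact Finset.sum_congr rfl fun r _ => (pow_add _ _ _)
          rw [this]
          have hg := geom_finset_le hq (Finset.Ico 1 (N+1))
          have h0 : (0:ℝ) ≤ ‖q‖^N := pow_nonneg (norm_nonneg q) N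
          have : ‖q‖^N * ∑ r ∈ Finset.Ico 1 (N+1), ‖q‖^r ≤ ‖q‖^N * (1 - ‖q‖)⁻¹ :=
            mul_le_mul_of_nonneg_left hg h0
          calc Real.exp (1-‖q‖)⁻¹ * (‖q‖^N * ∑ r ∈ Finset.Ico 1 (N+1), ‖q‖^r)
              ≤ Real.exp (1-‖q‖)⁻¹ * (‖q‖^N * (1 - ‖q‖)⁻¹) :=
                mul_le_mul_of_nonneg_left this (Real.exp_nonneg _)
            _ = Real.exp (1-‖q‖)⁻¹ * (1-‖q‖)⁻¹ * ‖q‖^N := by ring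
  have hzero : Tendsto (fun N => shanksL q N - ∏ i ∈ Finset.range N, (1 - q^(i+1)))
      atTop (nhds 0) := by
    apply squeeze_zero_norm hdiff
    rw [show (0:ℝ) = Real.exp (1-‖q‖)⁻¹ * (1-‖q‖)⁻¹ * 0 by ring]
    exact (tendsto_pow_atTop_nhds_zero_of_lt_one (norm_nonneg q) hq).const_mul _
  have := hzero.add hF
  simpa using this


end PentSection

private lemma two_mul_tri (n : ℕ) : 2 * tri n = n*n + n := by
  induction n with
  | zero => simp [tri]
  | succ m ih => simp only [tri]; ring_nf; ring_nf at ih; linarith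

private lemma expE1 (i : ℕ) : 24*(i*i + tri i + (2*i+1)) + 1 = (6*i+5)^2 := by
  have h := two_mul_tri i
  ring_nf; ring_nf at h; linarith

private lemma expE2 (i : ℕ) : 24*((i+1)*(i+1) + tri (i+1)) + 1 = (6*i+7)^2 := by
  have h := two_mul_tri i
  simp only [tri]
  ring_nf; ring_nf at h; linarith

lemma pentagonal_eta {x : ℂ} (hx1 : ‖x‖ < 1) :
    HasSum (fun k : ℤ => (-1)^k * x^((6*k+1)^2))
      (x * ∏' n : ℕ, (1 - (x^24)^(n+1))) := by
  set q : ℂ := x^24 with hqdef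
  have hq : ‖q‖ < 1 := by
    rw [hqdef, norm_pow]
    calc ‖x‖^24 ≤ ‖x‖^1 := pow_le_pow_of_le_one (norm_nonneg x) hx1.le (by norm_num)
      _ = ‖x‖ := pow_one _
      _ < 1 := hx1
  set gp : ℕ → ℂ := fun n => (-1)^n * x^((6*n+1)^2) with hgp
  set gm : ℕ → ℂ := fun n => (-1)^(n+1) * x^((6*n+5)^2) with hgm
  have hnorm : ∀ (c : ℂ) (e n : ℕ), ‖c‖ = 1 → n ≤ e → ‖c * x^e‖ ≤ ‖x‖^n := by
    intro c e n hc hne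
    rw [norm_mul, hc, one_mul, norm_pow]
    exact pow_le_pow_of_le_one (norm_nonneg x) hx1.le hne
  have hsp : Summable gp := by
    apply Summable.of_norm
    apply Summable.of_nonneg_of_le (fun n => norm_nonneg _) (fun n => ?_)
      (summable_geometric_of_lt_one (norm_nonneg x) hx1)
    exact hnorm _ _ n (by rw [norm_pow, norm_neg, norm_one, one_pow]) (by nlinarith)
  have hsm : Summable gm := by
    apply Summable.of_norm
    apply Summable.of_nonneg_of_le (fun n => norm_nonneg _) (fun n => ?_)
      (summable_geometric_of_lt_one (norm_nonneg x) hx1)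
    exact hnorm _ _ n (by rw [norm_pow, norm_neg, norm_one, one_pow]) (by nlinarith)
  have hxq : ∀ a : ℕ, x * q^a = x^(24*a+1) := by
    intro a
    rw [hqdef, ← pow_mul, pow_add, pow_one]
    ring
  have key : ∀ N : ℕ, x * shanksL q N
      = (∑ n ∈ Finset.range (N+1), gp n) + (∑ n ∈ Finset.range N, gm n) := by
    intro N
    rw [shanksL_formula, mul_add, mul_one, Finset.mul_sum]
    rw [Finset.sum_range_succ' gp]
    have hg0 : gp 0 = x := by simp [hgp]
    rw [hg0]
    have hterm : ∀ i ∈ Finset.range N,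
        x * ((-1:ℂ)^(i+1) * (q^((i+1)*(i+1) + tri (i+1)) + q^(i*i + tri i + (2*i+1))))
        = gp (i+1) + gm i := by
      intro i _
      have e2 : x * q^((i+1)*(i+1) + tri (i+1)) = x^((6*i+7)^2) := by
        rw [hxq, expE2]
      have e1 : x * q^(i*i + tri i + (2*i+1)) = x^((6*i+5)^2) := by
        rw [hxq, expE1]
      have hg1 : gp (i+1) = (-1:ℂ)^(i+1) * x^((6*i+7)^2) := by
        simp only [hgp]
        norm_num
        rw [show 6*(i+1)+1 = 6*i+7 from by ring]
      rw [hg1, hgm]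
      simp only
      rw [← e1, ← e2]
      ring
    rw [Finset.sum_congr rfl hterm, Finset.sum_add_distrib]
    ring
  have tendsto1 : Tendsto (fun N => x * shanksL q N) atTop
      (nhds (x * ∏' n : ℕ, (1 - q^(n+1)))) := (tendsto_shanksL hq).const_mul x
  have tendsto2 : Tendsto
      (fun N => (∑ n ∈ Finset.range (N+1), gp n) + (∑ n ∈ Finset.range N, gm n)) atTop
      (nhds ((∑' n, gp n) + (∑' n, gm n))) := by
    apply Tendsto.add
    · exact hsp.hasSum.tendsto_sum_nat.comp (tendsto_add_atTop_nat 1)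
    · exact hsm.hasSum.tendsto_sum_nat
  have heq : (∑' n, gp n) + (∑' n, gm n) = x * ∏' n : ℕ, (1 - q^(n+1)) :=
    tendsto_nhds_unique tendsto2 (tendsto1.congr key)
  rw [← heq]
  apply HasSum.of_nat_of_neg_add_one
  · have hfn : (fun n : ℕ => ((-1:ℂ)^(n:ℤ) * x^((6*(n:ℤ)+1)^2))) = gp := by
      funext n
      have h1 : (6*(n:ℤ)+1)^2 = (((6*n+1)^2 : ℕ) : ℤ) := by push_cast; ring
      rw [h1, zpow_natCast, zpow_natCast]
    rw [hfn]; exact hsp.hasSum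
  · have hfn : (fun n : ℕ => ((-1:ℂ)^(-((n:ℤ)+1)) * x^((6*(-((n:ℤ)+1))+1)^2))) = gm := by
      funext n
      have h1 : (6*(-((n:ℤ)+1))+1)^2 = (((6*n+5)^2 : ℕ) : ℤ) := by push_cast; ring
      have h2 : (-((n:ℤ)+1)) = -(((n+1:ℕ)):ℤ) := by push_cast; ring
      rw [h1, zpow_natCast, h2, zpow_neg, zpow_natCast]
      have h3 : ((-1:ℂ)^(n+1))⁻¹ = (-1:ℂ)^(n+1) := by
        rcases Nat.even_or_odd (n+1) with h | h
        · rw [h.neg_one_pow]; norm_num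
        · rw [h.neg_one_pow]; norm_num
      rw [h3]
    rw [hfn]; exact hsm.hasSum

private lemma chi_pos (k : ℤ) : χ (6*k+1) = (-1)^k := by
  rcases Int.even_or_odd k with ⟨t, rfl⟩ | ⟨t, rfl⟩
  · have hm : (6*(t+t)+1) % 12 = 1 := by omega
    rw [show χ (6*(t+t)+1) = 1 by simp [χ, hm], Even.neg_one_zpow ⟨t, rfl⟩]
  · have hm : (6*(2*t+1)+1) % 12 = 7 := by omega
    rw [show χ (6*(2*t+1)+1) = -1 by simp [χ, hm], Odd.neg_one_zpow ⟨t, rfl⟩]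

private lemma chi_neg (k : ℤ) : χ (-(6*k+1)) = (-1)^k := by
  rcases Int.even_or_odd k with ⟨t, rfl⟩ | ⟨t, rfl⟩
  · have hm : (-(6*(t+t)+1)) % 12 = 11 := by omega
    have hv : χ (-(6*(t+t)+1)) = 1 := by
      simp only [χ]; rw [if_pos (Or.inr hm)]
    rw [hv, Even.neg_one_zpow ⟨t, rfl⟩]
  · have hm : (-(6*(2*t+1)+1)) % 12 = 5 := by omega
    have hv : χ (-(6*(2*t+1)+1)) = -1 := by
      simp only [χ]; rw [if_neg (by omega), if_pos (Or.inl hm)]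
    rw [hv, Odd.neg_one_zpow ⟨t, rfl⟩]

theorem eta_character_series (τ : ℂ) (hτ : 0 < τ.im) :
    dedekindEta τ = (1 / 2 : ℂ) * ∑' n : ℤ, χ n * Complex.exp (π * I * τ * (n : ℂ) ^ 2 / 12) := by
  set x : ℂ := Complex.exp (π * I * τ / 12) with hxdef
  have hre : (π * I * τ / 12 : ℂ).re = -(π * τ.im)/12 := by
    have h12 : ((12 : ℂ) : ℂ) = ((12:ℝ) : ℂ) := by norm_num
    rw [show (π * I * τ / 12 : ℂ) = (π : ℂ) * (I * τ) / ((12:ℝ):ℂ) by push_cast; ring]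
    rw [Complex.div_ofReal_re]
    have h2 : ((π:ℂ) * (I * τ)).re = -(π * τ.im) := by
      simp [Complex.mul_re]
    rw [h2]
  have hx1 : ‖x‖ < 1 := by
    rw [hxdef, Complex.norm_exp, hre]
    rw [Real.exp_lt_one_iff]
    have := Real.pi_pos
    have := mul_pos Real.pi_pos hτ
    linarith
  have heta : dedekindEta τ = x * ∏' n : ℕ, (1 - (x^24)^(n+1)) := by
    rw [dedekindEta, ← hxdef]
    congr 1
    apply tprod_congr
    intro n
    congr 1
    conv_rhs => rw [hxdef, ← Complex.exp_nat_mul, ← Complex.exp_nat_mul]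
    congr 1
    push_cast
    ring
  set f : ℤ → ℂ := fun n => χ n * Complex.exp (π * I * τ * (n : ℂ) ^ 2 / 12) with hfdef
  have hexp_eq : ∀ m : ℤ, Complex.exp (π * I * τ * ((m : ℂ)) ^ 2 / 12) = x^(m^2) := by
    intro m
    rw [hxdef, ← Complex.exp_int_mul]
    congr 1
    push_cast
    ring
  have hinj1 : Function.Injective (fun k : ℤ => 6*k+1) := by
    intro a b h; simp only at h; omega
  have hinj2 : Function.Injective (fun k : ℤ => -(6*k+1)) := by
    intro a b h; simp only at h; omega
  have hcomp1 : (f ∘ (fun k : ℤ => 6*k+1)) = fun k : ℤ => (-1)^k * x^((6*k+1)^2) := by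
    funext k
    simp only [Function.comp_apply, hfdef]
    rw [chi_pos, hexp_eq]
  have hcomp2 : (f ∘ (fun k : ℤ => -(6*k+1))) = fun k : ℤ => (-1)^k * x^((6*k+1)^2) := by
    funext k
    simp only [Function.comp_apply, hfdef]
    rw [chi_neg, hexp_eq]
    rw [show (-(6*k+1))^2 = (6*k+1)^2 by ring]
  have hpent : HasSum (fun k : ℤ => (-1)^k * x^((6*k+1)^2)) (dedekindEta τ) := by
    rw [heta]; exact pentagonal_eta hx1
  have h1 : HasSum (f ∘ ((↑) : (Set.range (fun k : ℤ => 6*k+1)) → ℤ)) (dedekindEta τ) :=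
    hinj1.hasSum_range_iff.mpr (hcomp1 ▸ hpent)
  have h2 : HasSum (f ∘ ((↑) : (Set.range (fun k : ℤ => -(6*k+1))) → ℤ)) (dedekindEta τ) :=
    hinj2.hasSum_range_iff.mpr (hcomp2 ▸ hpent)
  have hdisj : Disjoint (Set.range (fun k : ℤ => 6*k+1)) (Set.range (fun k : ℤ => -(6*k+1))) := by
    rw [Set.disjoint_left]
    rintro a ⟨k, rfl⟩ ⟨k', hk'⟩
    simp only at hk'
    omega
  have hunion := h1.add_disjoint hdisj h2
  have hsupp : Function.support f ⊆
      (Set.range (fun k : ℤ => 6*k+1)) ∪ (Set.range (fun k : ℤ => -(6*k+1))) := by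
    intro n hn
    simp only [Function.mem_support, hfdef] at hn
    have hχ : χ n ≠ 0 := by
      intro h; apply hn; rw [h]; ring
    by_cases h1' : n % 12 = 1 ∨ n % 12 = 11
    · rcases h1' with h | h
      · exact Or.inl ⟨(n-1)/6, by simp only; omega⟩
      · exact Or.inr ⟨(-n-1)/6, by simp only; omega⟩
    · by_cases h2' : n % 12 = 5 ∨ n % 12 = 7
      · rcases h2' with h | h
        · exact Or.inr ⟨(-n-1)/6, by simp only; omega⟩
        · exact Or.inl ⟨(n-1)/6, by simp only; omega⟩
      · exfalso; apply hχ; simp [χ, h1', h2']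
  have hf : HasSum f (dedekindEta τ + dedekindEta τ) :=
    (hasSum_subtype_iff_of_support_subset hsupp).mp hunion
  rw [hf.tsum_eq]
  ring
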